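/- Fix integers e > 1 and k with 0 ≤ k ≤ e−1, and let Υ act on ℤ^N coordinatewise. Let φ : Q_e → Q_{e+1} be the ℤ-linear map with φ(α_i) = α_i for 0 ≤ i ≤ k−1, φ(α_k) = α_k + α_{k+1}, and φ(α_i) = α_{i+1} for k+1 ≤ i ≤ e−1 (indices read in ℤ/eℤ and ℤ/(e+1)ℤ respectively via their representatives in {0,…,e−1} and {0,…,e}). Then for all λ¹, λ² ∈ ℤ^N and all q : ℤ/eℤ → ℤ: if wt^χ_e(λ¹) − wt^χ_e(λ²) = ι^χ_e(q), then wt^χ_{e+1}(Υ(λ¹)) − wt^χ_{e+1}(Υ(λ²)) = ι^χ_{e+1}(φ(q)). In other words, wt^χ_{e+1}(Υ(λ¹)) − wt^χ_{e+1}(Υ(λ²)) = φ(wt^χ_e(λ¹) − wt^χ_e(λ²)) under the identifications ι^χ. -/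
import Mathlib


/-- The map `Υ : ℤ → ℤ` defined by `Υ(a·e + b) = a·(e+1) + b` if `0 ≤ b ≤ k` and
`Υ(a·e + b) = a·(e+1) + b + 1` if `k+1 ≤ b ≤ e−1`, where `b` is the residue modulo `e`. -/
def Ups (e k a : ℤ) : ℤ :=
  if a % e ≤ k then a / e * (e + 1) + a % e else a / e * (e + 1) + a % e + 1

/-- `wt^χ_m(λ) = Σ_r ε_{λ_r mod m} + (Σ_r λ_r)·χ`, an element of the free abelian group
`X^χ_m` with basis `{ε_i : i ∈ ℤ/mℤ} ∪ {χ}`, realized as `(ZMod m → ℤ) × ℤ`. -/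
def wtChi (m : ℕ) [NeZero m] {N : ℕ} (lam : Fin N → ℤ) : (ZMod m → ℤ) × ℤ :=
  (fun i => ((Finset.univ.filter fun r : Fin N => ((lam r : ZMod m) = i)).card : ℤ),
    ∑ r, lam r)

/-- The injective `ℤ`-linear map `ι^χ_m : Q_m → X^χ_m`, `α_i ↦ ε_i − ε_{i+1} − χ`. -/
def iotaChi (m : ℕ) [NeZero m] (q : ZMod m → ℤ) : (ZMod m → ℤ) × ℤ :=
  (fun i => q i - q (i - 1), -(∑ i, q i))

/-- The `ℤ`-linear map `φ : Q_e → Q_{e+1}` with `φ(α_i) = α_i` for `0 ≤ i ≤ k−1`,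
`φ(α_k) = α_k + α_{k+1}`, and `φ(α_i) = α_{i+1}` for `k+1 ≤ i ≤ e−1` (indices read via
their representatives in `{0,…,e−1}` resp. `{0,…,e}`), expressed on coefficients. -/
def phiMap (e k : ℕ) [NeZero e] (q : ZMod e → ℤ) : ZMod (e + 1) → ℤ := fun j =>
  if j.val ≤ k then q ((j.val : ℕ) : ZMod e) else q ((j.val - 1 : ℕ) : ZMod e)

lemma zmod_cast_eq (m : ℕ) [NeZero m] (x : ℤ) (c : ℕ) (hc : c < m) :
    ((x : ZMod m) = (c : ZMod m)) ↔ x % m = c := by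
  have h1 : ((c : ℕ) : ZMod m) = ((c : ℤ) : ZMod m) := by push_cast; rfl
  rw [h1, ZMod.intCast_eq_intCast_iff']
  have h2 : (c : ℤ) % m = c := Int.emod_eq_of_lt (by positivity) (by exact_mod_cast hc)
  rw [h2]

lemma eq_cast_iff {m : ℕ} [NeZero m] (i : ZMod m) (c : ℕ) (hc : c < m) :
    i = (c : ZMod m) ↔ i.val = c := by
  constructor
  · intro h; rw [h, ZMod.val_cast_of_lt hc]
  · intro h; conv_lhs => rw [← ZMod.natCast_rightInverse i]
    rw [h]

lemma emod_eq_valZ {m : ℕ} [NeZero m] (a : ℤ) : a % m = ((a : ZMod m).val : ℤ) :=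
  (ZMod.val_intCast a).symm

lemma ups_eq (e k a : ℤ) : Ups e k a = a + a / e + (if a % e ≤ k then 0 else 1) := by
  have h := Int.mul_ediv_add_emod a e
  unfold Ups
  split <;> [skip; skip] <;> linear_combination h

lemma ups_emod (e k a : ℤ) (he : 0 < e) (hk : 0 ≤ k) (hke : k < e) :
    Ups e k a % (e + 1) = if a % e ≤ k then a % e else a % e + 1 := by
  have hb1 : 0 ≤ a % e := Int.emod_nonneg a (by omega)
  have hb2 : a % e < e := Int.emod_lt_of_pos a he
  unfold Ups
  split <;> rename_i hsp
  · rw [show a / e * (e + 1) + a % e = a % e + (e+1) * (a/e) by ring,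
      Int.add_mul_emod_self_left, Int.emod_eq_of_lt hb1 (by omega)]
  · rw [show a / e * (e + 1) + a % e + 1 = (a % e + 1) + (e+1) * (a/e) by ring,
      Int.add_mul_emod_self_left, Int.emod_eq_of_lt (by omega) (by omega)]

lemma sum_zmod (m : ℕ) [NeZero m] (f : ZMod m → ℤ) :
    ∑ i : ZMod m, f i = ∑ b ∈ Finset.range m, f (b : ZMod m) :=
  Finset.sum_nbij' (fun i => i.val) (fun b => (b : ZMod m))
    (fun i _ => Finset.mem_range.2 (ZMod.val_lt i))
    (fun _ _ => Finset.mem_univ _)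
    (fun i _ => ZMod.natCast_rightInverse i)
    (fun b hb => ZMod.val_cast_of_lt (Finset.mem_range.1 hb))
    (fun i _ => by rw [ZMod.natCast_rightInverse i])

lemma sum_comp_count {N m : ℕ} [NeZero m] (lam : Fin N → ℤ) (f : ZMod m → ℤ) :
    ∑ r, f ((lam r : ZMod m)) =
      ∑ i : ZMod m,
        ((Finset.univ.filter fun r : Fin N => ((lam r : ZMod m) = i)).card : ℤ) * f i := by
  rw [← Finset.sum_fiberwise' Finset.univ (fun r => ((lam r : ℤ) : ZMod m)) f]
  exact Finset.sum_congr rfl fun i _ => by rw [Finset.sum_const, nsmul_eq_mul]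

lemma sum_shift {m : ℕ} [NeZero m] (q u : ZMod m → ℤ) :
    ∑ i, q (i - 1) * u i = ∑ i, q i * u (i + 1) :=
  (Fintype.sum_equiv (Equiv.addRight (1 : ZMod m)) (fun i => q i * u (i + 1))
    (fun i => q (i - 1) * u i) (fun i => by simp)).symm

lemma val_add_one {m : ℕ} [NeZero m] (hm : 1 < m) (i : ZMod m) :
    (((i + 1).val : ℤ)) = if i = ((m - 1 : ℕ) : ZMod m) then 0 else (i.val : ℤ) + 1 := by
  by_cases hi : i = ((m - 1 : ℕ) : ZMod m)
  · rw [if_pos hi, hi]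
    have : ((m - 1 : ℕ) : ZMod m) + 1 = 0 := by
      have : (((m - 1 : ℕ) + 1 : ℕ) : ZMod m) = ((m : ℕ) : ZMod m) := by congr 1; omega
      push_cast at this
      rw [this, ZMod.natCast_self]
    rw [this, ZMod.val_zero, Int.natCast_zero]
  · rw [if_neg hi]
    have h1 : i.val < m := ZMod.val_lt i
    have h2 : i.val ≠ m - 1 := fun hv => hi (by rw [(eq_cast_iff i (m-1) (by omega)), hv])
    have h3 : i + 1 = ((i.val + 1 : ℕ) : ZMod m) := by
      conv_lhs => rw [← ZMod.natCast_rightInverse i]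
      push_cast; ring
    rw [h3, ZMod.val_cast_of_lt (by omega)]
    push_cast; ring

lemma sum_qv {m : ℕ} [NeZero m] (hm : 1 < m) (q : ZMod m → ℤ) :
    ∑ i : ZMod m, (q i - q (i - 1)) * (i.val : ℤ) =
      -∑ i : ZMod m, q i + (m : ℤ) * q ((m - 1 : ℕ) : ZMod m) := by
  have step1 : ∑ i : ZMod m, (q i - q (i - 1)) * (i.val : ℤ)
      = ∑ i : ZMod m, q i * ((i.val : ℤ) - (((i + 1).val : ℤ))) := by
    simp only [sub_mul, mul_sub, Finset.sum_sub_distrib, sum_shift q (fun i => (i.val : ℤ))]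
  rw [step1]
  have step2 : ∀ i : ZMod m, q i * ((i.val : ℤ) - (((i + 1).val : ℤ)))
      = -q i + (if i = ((m - 1 : ℕ) : ZMod m) then (m : ℤ) * q i else 0) := by
    intro i
    rw [val_add_one hm i]
    split_ifs with hi
    · rw [hi, ZMod.val_cast_of_lt (show m - 1 < m by omega)]
      have : ((m - 1 : ℕ) : ℤ) = (m : ℤ) - 1 := by omega
      rw [this]; ring
    · ring
  rw [Finset.sum_congr rfl fun i _ => step2 i, Finset.sum_add_distrib, Finset.sum_neg_distrib,
    Finset.sum_ite_eq' Finset.univ ((m - 1 : ℕ) : ZMod m) (fun i => (m : ℤ) * q i)]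
  simp

lemma sum_qw {m k : ℕ} [NeZero m] (hm : 1 < m) (hk : k < m) (q : ZMod m → ℤ) :
    ∑ i : ZMod m, (q i - q (i - 1)) * (if i.val ≤ k then 0 else 1) =
      q ((m - 1 : ℕ) : ZMod m) - q ((k : ℕ) : ZMod m) := by
  have step1 : ∑ i : ZMod m, (q i - q (i - 1)) * (if i.val ≤ k then (0:ℤ) else 1)
      = ∑ i : ZMod m, q i * ((if i.val ≤ k then (0:ℤ) else 1) - (if (i+1).val ≤ k then (0:ℤ) else 1)) := by
    simp only [sub_mul, mul_sub, Finset.sum_sub_distrib,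
      sum_shift q (fun i => (if i.val ≤ k then (0:ℤ) else 1))]
  rw [step1]
  have step2 : ∀ i : ZMod m, q i * ((if i.val ≤ k then (0:ℤ) else 1) - (if (i+1).val ≤ k then (0:ℤ) else 1))
      = (if i = ((m - 1 : ℕ) : ZMod m) then q i else 0) - (if i = ((k : ℕ) : ZMod m) then q i else 0) := by
    intro i
    have hv1 : ((i + 1).val : ℤ) = if i = ((m - 1 : ℕ) : ZMod m) then 0 else (i.val : ℤ) + 1 :=
      val_add_one hm i
    have hvlt : i.val < m := ZMod.val_lt i
    have hik : i = ((k : ℕ) : ZMod m) ↔ i.val = k := eq_cast_iff i k hk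
    have him : i = ((m - 1 : ℕ) : ZMod m) ↔ i.val = m - 1 := eq_cast_iff i (m-1) (by omega)
    by_cases h1 : i = ((m - 1 : ℕ) : ZMod m)
    · rw [if_pos h1]
      rw [if_pos h1] at hv1
      have hval : ((i + 1).val : ℤ) = 0 := hv1
      have hv0 : (i+1).val = 0 := by exact_mod_cast hval
      rw [hv0]
      have hvm : i.val = m - 1 := him.1 h1
      by_cases h2 : i = ((k : ℕ) : ZMod m)
      · have : i.val = k := hik.1 h2
        rw [if_pos h2, if_pos (by omega : i.val ≤ k), if_pos (by omega : 0 ≤ k)]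
        ring
      · have : i.val ≠ k := fun hh => h2 (hik.2 hh)
        rw [if_neg h2, if_neg (by omega : ¬ i.val ≤ k), if_pos (by omega : 0 ≤ k)]
        ring
    · rw [if_neg h1]
      rw [if_neg h1] at hv1
      have hvm : i.val ≠ m - 1 := fun hh => h1 (him.2 hh)
      have hv0 : (i+1).val = i.val + 1 := by exact_mod_cast hv1
      rw [hv0]
      by_cases h2 : i = ((k : ℕ) : ZMod m)
      · have hvk : i.val = k := hik.1 h2
        rw [if_pos h2, if_pos (by omega : i.val ≤ k), if_neg (by omega : ¬ i.val + 1 ≤ k)]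
        ring
      · have hvk : i.val ≠ k := fun hh => h2 (hik.2 hh)
        rw [if_neg h2]
        by_cases h3 : i.val ≤ k
        · rw [if_pos h3, if_pos (by omega : i.val + 1 ≤ k)]; ring
        · rw [if_neg h3, if_neg (by omega : ¬ i.val + 1 ≤ k)]; ring
  rw [Finset.sum_congr rfl fun i _ => step2 i, Finset.sum_sub_distrib,
    Finset.sum_ite_eq' Finset.univ ((m - 1 : ℕ) : ZMod m) q,
    Finset.sum_ite_eq' Finset.univ ((k : ℕ) : ZMod m) q]
  simp

lemma sum_phi (e k : ℕ) [NeZero e] (he : 1 < e) (hk : k < e) (q : ZMod e → ℤ) :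
    ∑ j : ZMod (e + 1), phiMap e k q j = q ((k : ℕ) : ZMod e) + ∑ i : ZMod e, q i := by
  rw [sum_zmod (e+1) (phiMap e k q), sum_zmod e q]
  have hphi : ∀ c ∈ Finset.range (e+1), phiMap e k q (c : ZMod (e+1))
      = if c ≤ k then q ((c : ℕ) : ZMod e) else q ((c - 1 : ℕ) : ZMod e) := by
    intro c hc
    have hcv : ((c : ZMod (e+1))).val = c := ZMod.val_cast_of_lt (Finset.mem_range.1 hc)
    unfold phiMap
    rw [hcv]
  rw [Finset.sum_congr rfl hphi]
  have hsplit : e + 1 = (k + 1) + (e - k) := by omega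
  have hsplit2 : e = k + (e - k) := by omega
  rw [show Finset.range (e+1) = Finset.range ((k + 1) + (e - k)) from by rw [← hsplit],
    Finset.sum_range_add]
  conv_rhs => rw [show Finset.range e = Finset.range (k + (e - k)) from by rw [← hsplit2],
    Finset.sum_range_add]
  have h1 : ∀ c ∈ Finset.range (k+1),
      (if c ≤ k then q ((c : ℕ) : ZMod e) else q ((c - 1 : ℕ) : ZMod e)) = q ((c : ℕ) : ZMod e) := by
    intro c hc
    have := Finset.mem_range.1 hc
    rw [if_pos (by omega : c ≤ k)]
  have h2 : ∀ c ∈ Finset.range (e - k),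
      (if (k + 1 + c) ≤ k then q (((k + 1 + c) : ℕ) : ZMod e) else q (((k + 1 + c) - 1 : ℕ) : ZMod e))
        = q (((k + c) : ℕ) : ZMod e) := by
    intro c hc
    rw [if_neg (by omega : ¬ k + 1 + c ≤ k)]
    congr 2
    omega
  rw [Finset.sum_congr rfl h1, Finset.sum_congr rfl h2, Finset.sum_range_succ]
  ring

lemma ups_cast_iff (e k : ℕ) (he : 1 < e) (hk : k < e) (a : ℤ) (c : ℕ) (hc : c ≤ e) :
    ((Ups (e : ℤ) (k : ℤ) a : ℤ) : ZMod (e + 1)) = (c : ZMod (e + 1)) ↔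
      (if c ≤ k then a % e = c else if c = k + 1 then False else a % e = (c : ℤ) - 1) := by
  haveI : NeZero (e + 1) := ⟨by omega⟩
  rw [zmod_cast_eq (e+1) _ c (by omega)]
  have hcast : ((e + 1 : ℕ) : ℤ) = (e : ℤ) + 1 := by push_cast; ring
  have hE : (0 : ℤ) < e := by exact_mod_cast (by omega : 0 < e)
  rw [hcast, ups_emod (e : ℤ) (k : ℤ) a hE (by positivity) (by exact_mod_cast hk)]
  have hb1 : 0 ≤ a % e := Int.emod_nonneg a (by omega)
  have hb2 : a % e < e := Int.emod_lt_of_pos a hE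
  constructor <;> { intro hx ; split_ifs at hx ⊢ <;> omega }

lemma count_congr {N : ℕ} (p q : Fin N → Prop) [DecidablePred p] [DecidablePred q]
    (h : ∀ r, p r ↔ q r) :
    (Finset.univ.filter p).card = (Finset.univ.filter q).card := by
  rw [Finset.filter_congr fun r _ => (h r)]

lemma cast_sub_one {m : ℕ} [NeZero m] (d : ℕ) (hd : 1 ≤ d) :
    ((d : ℕ) : ZMod m) - 1 = ((d - 1 : ℕ) : ZMod m) := by
  have h : ((d - 1) + 1 : ℕ) = d := by omega
  rw [← h]
  push_cast
  ring

lemma cast_pred_eq_neg_one {m : ℕ} [NeZero m] : ((m - 1 : ℕ) : ZMod m) = -1 := by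
  have hm : 1 ≤ m := Nat.one_le_iff_ne_zero.2 (NeZero.ne m)
  have h : ((m - 1 : ℕ) : ZMod m) + 1 = 0 := by
    have h2 : (((m - 1 : ℕ) + 1 : ℕ) : ZMod m) = ((m : ℕ) : ZMod m) := by congr 1; omega
    push_cast at h2
    rw [h2, ZMod.natCast_self]
  linear_combination h

lemma zero_sub_one {m : ℕ} [NeZero m] : (0 : ZMod m) - 1 = ((m - 1 : ℕ) : ZMod m) := by
  rw [cast_pred_eq_neg_one]; ring

lemma count_ups_eq (e k : ℕ) [NeZero e] (he : 1 < e) (hk : k < e) {N : ℕ} (lam : Fin N → ℤ)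
    (c : ℕ) (hc : c ≤ e) (hck : c ≠ k + 1) :
    (Finset.univ.filter fun r : Fin N =>
        ((Ups (e : ℤ) (k : ℤ) (lam r) : ℤ) : ZMod (e + 1)) = (c : ZMod (e + 1))).card =
      (Finset.univ.filter fun r : Fin N =>
        ((lam r : ZMod e) = (((if c ≤ k then c else c - 1) : ℕ) : ZMod e))).card := by
  apply count_congr
  intro r
  rw [ups_cast_iff e k he hk (lam r) c hc,
    zmod_cast_eq e (lam r) (if c ≤ k then c else c - 1) (by split_ifs <;> omega)]
  by_cases h2 : c ≤ k
  · rw [if_pos h2, if_pos h2]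
  · rw [if_neg h2, if_neg hck, if_neg h2]
    constructor <;> intro hx <;> omega

lemma count_ups_empty (e k : ℕ) [NeZero e] (he : 1 < e) (hk : k < e) {N : ℕ} (lam : Fin N → ℤ) :
    (Finset.univ.filter fun r : Fin N =>
        ((Ups (e : ℤ) (k : ℤ) (lam r) : ℤ) : ZMod (e + 1)) = ((k + 1 : ℕ) : ZMod (e + 1))).card
      = 0 := by
  rw [Finset.card_eq_zero]
  apply Finset.filter_false_of_mem
  intro r _
  rw [ups_cast_iff e k he hk (lam r) (k + 1) (by omega)]
  rw [if_neg (by omega), if_pos rfl]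
  exact id

/-- If `wt^χ_e(λ¹) − wt^χ_e(λ²) = ι^χ_e(q)` then
`wt^χ_{e+1}(Υλ¹) − wt^χ_{e+1}(Υλ²) = ι^χ_{e+1}(φ(q))`. -/
theorem stmt4 (e k : ℕ) [NeZero e] (he : 1 < e) (hk : k ≤ e - 1)
    (N : ℕ) (lam₁ lam₂ : Fin N → ℤ) (q : ZMod e → ℤ)
    (h : wtChi e lam₁ - wtChi e lam₂ = iotaChi e q) :
    wtChi (e + 1) (fun i => Ups (e : ℤ) (k : ℤ) (lam₁ i)) -
        wtChi (e + 1) (fun i => Ups (e : ℤ) (k : ℤ) (lam₂ i)) =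
      iotaChi (e + 1) (phiMap e k q) := by
  have hke : k < e := by omega
  have hq : ∀ i : ZMod e,
      ((Finset.univ.filter fun r : Fin N => ((lam₁ r : ZMod e) = i)).card : ℤ) -
        ((Finset.univ.filter fun r : Fin N => ((lam₂ r : ZMod e) = i)).card : ℤ) =
        q i - q (i - 1) := by
    intro i
    have h1 := congrArg (fun p : (ZMod e → ℤ) × ℤ => p.1 i) h
    simpa [wtChi, iotaChi] using h1
  have hS : (∑ r, lam₁ r) - (∑ r, lam₂ r) = -(∑ i, q i) := by
    have h2 := congrArg Prod.snd h
    simpa [wtChi, iotaChi] using h2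
  rw [Prod.ext_iff]
  constructor
  · -- first component
    simp only [wtChi, iotaChi, Prod.fst_sub]
    funext j
    simp only [Pi.sub_apply]
    have hc : j.val < e + 1 := ZMod.val_lt j
    have hj : ((j.val : ℕ) : ZMod (e + 1)) = j := ZMod.natCast_rightInverse j
    by_cases hc0 : j.val = 0
    · -- case c = 0
      have hj0 : j = 0 := by rw [← hj, hc0, Nat.cast_zero]
      have hjm : j - 1 = ((e : ℕ) : ZMod (e + 1)) := by
        rw [hj0, zero_sub_one]
        norm_num
      have hφ1 : phiMap e k q j = q ((0 : ℕ) : ZMod e) := by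
        unfold phiMap; rw [if_pos (by omega : j.val ≤ k), hc0]
      have hφ2 : phiMap e k q (j - 1) = q ((e - 1 : ℕ) : ZMod e) := by
        unfold phiMap
        rw [hjm, ZMod.val_cast_of_lt (by omega : e < e + 1), if_neg (by omega : ¬ e ≤ k)]
      rw [hφ1, hφ2, ← hj, hc0]
      rw [count_ups_eq e k he hke lam₁ 0 (by omega) (by omega),
        count_ups_eq e k he hke lam₂ 0 (by omega) (by omega)]
      rw [if_pos (by omega : 0 ≤ k)]
      have := hq ((0 : ℕ) : ZMod e)
      rw [Nat.cast_zero] at this ⊢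
      rw [this, zero_sub_one]
    · by_cases hck : j.val ≤ k
      · -- case 1 ≤ c ≤ k
        have hjm : j - 1 = ((j.val - 1 : ℕ) : ZMod (e + 1)) := by
          conv_lhs => rw [← hj]
          rw [cast_sub_one _ (by omega)]
        have hφ1 : phiMap e k q j = q ((j.val : ℕ) : ZMod e) := by
          unfold phiMap; rw [if_pos hck]
        have hφ2 : phiMap e k q (j - 1) = q ((j.val - 1 : ℕ) : ZMod e) := by
          unfold phiMap
          rw [hjm, ZMod.val_cast_of_lt (by omega : j.val - 1 < e + 1),
            if_pos (by omega : j.val - 1 ≤ k)]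
        rw [hφ1, hφ2]
        conv_lhs => rw [← hj]
        rw [count_ups_eq e k he hke lam₁ j.val (by omega) (by omega),
          count_ups_eq e k he hke lam₂ j.val (by omega) (by omega)]
        rw [if_pos hck]
        rw [hq ((j.val : ℕ) : ZMod e), cast_sub_one _ (by omega : 1 ≤ j.val)]
      · by_cases hck1 : j.val = k + 1
        · -- case c = k + 1
          have hjm : j - 1 = ((k : ℕ) : ZMod (e + 1)) := by
            conv_lhs => rw [← hj]
            rw [hck1, cast_sub_one _ (by omega)]
            simp
          have hφ1 : phiMap e k q j = q ((k : ℕ) : ZMod e) := by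
            unfold phiMap
            rw [if_neg hck, hck1]
            simp
          have hφ2 : phiMap e k q (j - 1) = q ((k : ℕ) : ZMod e) := by
            unfold phiMap
            rw [hjm, ZMod.val_cast_of_lt (by omega : k < e + 1), if_pos (le_refl k)]
          rw [hφ1, hφ2]
          conv_lhs => rw [← hj]
          rw [hck1]
          rw [count_ups_empty e k he hke lam₁, count_ups_empty e k he hke lam₂]
          simp
        · -- case k + 2 ≤ c ≤ e
          have hge : k + 2 ≤ j.val := by omega
          have hjm : j - 1 = ((j.val - 1 : ℕ) : ZMod (e + 1)) := by
            conv_lhs => rw [← hj]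
            rw [cast_sub_one _ (by omega)]
          have hφ1 : phiMap e k q j = q ((j.val - 1 : ℕ) : ZMod e) := by
            unfold phiMap; rw [if_neg hck]
          have hφ2 : phiMap e k q (j - 1) = q ((j.val - 2 : ℕ) : ZMod e) := by
            unfold phiMap
            rw [hjm, ZMod.val_cast_of_lt (by omega : j.val - 1 < e + 1),
              if_neg (by omega : ¬ j.val - 1 ≤ k),
              show j.val - 1 - 1 = j.val - 2 from by omega]
          rw [hφ1, hφ2]
          conv_lhs => rw [← hj]
          rw [count_ups_eq e k he hke lam₁ j.val (by omega) (by omega),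
            count_ups_eq e k he hke lam₂ j.val (by omega) (by omega)]
          rw [if_neg hck]
          rw [hq ((j.val - 1 : ℕ) : ZMod e), cast_sub_one _ (by omega : 1 ≤ j.val - 1),
            show j.val - 1 - 1 = j.val - 2 from by omega]
  · -- second component
    simp only [wtChi, iotaChi, Prod.snd_sub]
    have hE : (0 : ℤ) < (e : ℤ) := by exact_mod_cast (by omega : 0 < e)
    have hsum : ∀ lam : Fin N → ℤ, ∑ r, Ups (e : ℤ) (k : ℤ) (lam r) =
        (∑ r, lam r) + (∑ r, lam r / (e : ℤ)) +
          ∑ r, (if (lam r) % (e : ℤ) ≤ (k : ℤ) then (0 : ℤ) else 1) := by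
      intro lam
      rw [← Finset.sum_add_distrib, ← Finset.sum_add_distrib]
      exact Finset.sum_congr rfl fun r _ => ups_eq (e : ℤ) (k : ℤ) (lam r)
    have hT : ∀ lam : Fin N → ℤ, ∑ r, (lam r) % (e : ℤ) =
        ∑ i : ZMod e,
          ((Finset.univ.filter fun r : Fin N => ((lam r : ZMod e) = i)).card : ℤ) * (i.val : ℤ) := by
      intro lam
      rw [← sum_comp_count lam (fun i => (i.val : ℤ))]
      exact Finset.sum_congr rfl fun r _ => emod_eq_valZ (lam r)
    have hI : ∀ lam : Fin N → ℤ, (∑ r, if (lam r) % (e : ℤ) ≤ (k : ℤ) then (0 : ℤ) else 1) =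
        ∑ i : ZMod e,
          ((Finset.univ.filter fun r : Fin N => ((lam r : ZMod e) = i)).card : ℤ) *
            (if i.val ≤ k then (0 : ℤ) else 1) := by
      intro lam
      rw [← sum_comp_count lam (fun i => if i.val ≤ k then (0 : ℤ) else 1)]
      refine Finset.sum_congr rfl fun r _ => ?_
      rw [emod_eq_valZ (lam r)]
      by_cases hv : ((lam r : ZMod e)).val ≤ k
      · rw [if_pos (by exact_mod_cast hv), if_pos hv]
      · rw [if_neg (fun hh => hv (by exact_mod_cast hh)), if_neg hv]
    have hQ : ∀ lam : Fin N → ℤ, (e : ℤ) * (∑ r, lam r / (e : ℤ)) =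
        (∑ r, lam r) - ∑ r, lam r % (e : ℤ) := by
      intro lam
      rw [Finset.mul_sum, ← Finset.sum_sub_distrib]
      refine Finset.sum_congr rfl fun r _ => ?_
      have hh := Int.mul_ediv_add_emod (lam r) (e : ℤ)
      linarith
    have hTdiff : (∑ r, lam₁ r % (e : ℤ)) - (∑ r, lam₂ r % (e : ℤ)) =
        -(∑ i, q i) + (e : ℤ) * q ((e - 1 : ℕ) : ZMod e) := by
      rw [hT lam₁, hT lam₂, ← Finset.sum_sub_distrib]
      refine (Finset.sum_congr rfl fun i _ => ?_).trans (sum_qv he q)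
      rw [← hq i]
      ring
    have hIdiff : (∑ r, if (lam₁ r) % (e : ℤ) ≤ (k : ℤ) then (0 : ℤ) else 1) -
        (∑ r, if (lam₂ r) % (e : ℤ) ≤ (k : ℤ) then (0 : ℤ) else 1) =
        q ((e - 1 : ℕ) : ZMod e) - q ((k : ℕ) : ZMod e) := by
      rw [hI lam₁, hI lam₂, ← Finset.sum_sub_distrib]
      refine (Finset.sum_congr rfl fun i _ => ?_).trans (sum_qw he hke q)
      rw [← hq i]
      ring
    have hQdiff : (∑ r, lam₁ r / (e : ℤ)) - (∑ r, lam₂ r / (e : ℤ)) =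
        -q ((e - 1 : ℕ) : ZMod e) := by
      have hcalc : (e : ℤ) * ((∑ r, lam₁ r / (e : ℤ)) - (∑ r, lam₂ r / (e : ℤ))) =
          (e : ℤ) * (-q ((e - 1 : ℕ) : ZMod e)) := by
        rw [mul_sub, hQ lam₁, hQ lam₂]
        rw [show (∑ r, lam₁ r) - (∑ r, lam₁ r % (e:ℤ)) - ((∑ r, lam₂ r) - ∑ r, lam₂ r % (e:ℤ))
            = ((∑ r, lam₁ r) - (∑ r, lam₂ r)) - ((∑ r, lam₁ r % (e:ℤ)) - ∑ r, lam₂ r % (e:ℤ))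
          from by ring, hS, hTdiff]
        ring
      exact mul_left_cancel₀ (ne_of_gt hE) hcalc
    have hphi := sum_phi e k he hke q
    rw [hsum lam₁, hsum lam₂, hphi]
    linarith [hS, hQdiff, hIdiff]
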